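/- arXiv:1708.03010 — 3 statements merged into one kernel-verified Lean document; each statement's English description precedes it below -/
import Mathlib

section
/- Let K be a field of characteristic zero, let R = K[x_1, …, x_d] be a polynomial ring, and let 𝔪 = (x_1, …, x_d). If 𝔭 ⊆ R is a prime ideal with 𝔭 ⊆ 𝔪^t for some positive integer t, then 𝔭^{(n)} ⊆ 𝔪^{n+t-1} for every positive integer n. -/
/-- The `n`-th symbolic power of a prime ideal `P`:
`P^{(n)} = P^n R_P ∩ R`, the preimage in `R` of `P^n R_P` under the localization map. -/
noncomputable def symbolicPower {R : Type*} [CommRing R] (P : Ideal R) [P.IsPrime] (n : ℕ) :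
    Ideal R :=
  (Ideal.map (algebraMap R (Localization.AtPrime P)) (P ^ n)).comap
    (algebraMap R (Localization.AtPrime P))


open MvPolynomial Finsupp

section DegIdeal

variable {σ K : Type*} [CommRing K]

/-- The ideal of polynomials all of whose monomials have degree at least `k`. -/
def degIdeal (σ K : Type*) [CommRing K] (k : ℕ) : Ideal (MvPolynomial σ K) where
  carrier := {f | ∀ m ∈ f.support, k ≤ m.sum fun _ e => e}
  zero_mem' := by simp
  add_mem' := by
    classical
    intro a b ha hb m hm
    rcases Finset.mem_union.mp (MvPolynomial.support_add hm) with h | h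
    · exact ha m h
    · exact hb m h
  smul_mem' := by
    classical
    intro c f hf m hm
    have := MvPolynomial.support_mul c f hm
    rcases Finset.mem_add.mp this with ⟨a, ha, b, hb, rfl⟩
    rw [Finsupp.sum_add_index (by simp) (by simp)]
    exact le_add_left (hf b hb)

theorem mul_mem_degIdeal {a b : ℕ} {f g : MvPolynomial σ K}
    (hf : f ∈ degIdeal σ K a) (hg : g ∈ degIdeal σ K b) :
    f * g ∈ degIdeal σ K (a + b) := by
  classical
  intro m hm
  rcases Finset.mem_add.mp (MvPolynomial.support_mul f g hm) with ⟨x, hx, y, hy, rfl⟩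
  rw [Finsupp.sum_add_index (by simp) (by simp)]
  exact add_le_add (hf x hx) (hg y hy)

theorem span_X_pow_le_degIdeal (k : ℕ) :
    (Ideal.span (Set.range (MvPolynomial.X : σ → MvPolynomial σ K))) ^ k ≤ degIdeal σ K k := by
  induction k with
  | zero => intro f _ m _; simp
  | succ k ih =>
    rw [pow_succ, Ideal.mul_le]
    intro r hr s hs
    have hs1 : s ∈ degIdeal σ K 1 := by
      refine Ideal.span_le.mpr ?_ hs
      rintro _ ⟨i, rfl⟩ m hm
      classical
      have hm' : m ∈ (MvPolynomial.monomial (Finsupp.single i 1) (1:K)).support := hm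
      rw [Finset.mem_singleton.mp (MvPolynomial.support_monomial_subset hm')]
      simp
    exact mul_mem_degIdeal (ih hr) hs1

theorem prod_X_pow_mem (s : σ →₀ ℕ) :
    (s.prod fun i e => (MvPolynomial.X i : MvPolynomial σ K) ^ e) ∈
      (Ideal.span (Set.range (MvPolynomial.X : σ → MvPolynomial σ K))) ^ (s.sum fun _ e => e) := by
  classical
  rw [Finsupp.prod, Finsupp.sum]
  induction s.support using Finset.cons_induction with
  | empty => simp
  | cons i t hit ih =>
    rw [Finset.prod_cons, Finset.sum_cons, pow_add]
    have hXi : (MvPolynomial.X i : MvPolynomial σ K) ∈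
        Ideal.span (Set.range (MvPolynomial.X : σ → MvPolynomial σ K)) :=
      Ideal.subset_span ⟨i, rfl⟩
    exact Ideal.mul_mem_mul (Ideal.pow_mem_pow hXi _) ih

theorem mem_span_X_pow_iff {k : ℕ} {f : MvPolynomial σ K} :
    f ∈ (Ideal.span (Set.range (MvPolynomial.X : σ → MvPolynomial σ K))) ^ k ↔
      ∀ m ∈ f.support, k ≤ m.sum fun _ e => e := by
  constructor
  · exact fun h => span_X_pow_le_degIdeal k h
  · intro h
    classical
    rw [f.as_sum]
    refine Ideal.sum_mem _ fun m hm => ?_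
    rw [MvPolynomial.monomial_eq]
    exact Ideal.mul_mem_left _ _
      (Ideal.pow_le_pow_right (h m hm) (prod_X_pow_mem m))

end DegIdeal

theorem mem_symbolicPower_iff {R : Type*} [CommRing R] [IsDomain R]
    (P : Ideal R) [P.IsPrime] (n : ℕ) (f : R) :
    f ∈ symbolicPower P n ↔ ∃ s, s ∉ P ∧ s * f ∈ P ^ n := by
  rw [symbolicPower, Ideal.mem_comap,
    IsLocalization.mem_map_algebraMap_iff P.primeCompl (Localization.AtPrime P)]
  constructor
  · rintro ⟨⟨a, s⟩, h⟩
    refine ⟨s, s.2, ?_⟩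
    have : algebraMap R (Localization.AtPrime P) ((s : R) * f) =
        algebraMap R (Localization.AtPrime P) (a : R) := by
      rw [map_mul, mul_comm, h]
    have := IsLocalization.injective (Localization.AtPrime P)
      P.primeCompl_le_nonZeroDivisors this
    rw [this]
    exact a.2
  · rintro ⟨s, hs, h⟩
    exact ⟨⟨⟨s * f, h⟩, ⟨s, hs⟩⟩, by simp [← map_mul, mul_comm]⟩

theorem derivation_mem_pow {R A : Type*} [CommRing R] [CommRing A] [Algebra R A]
    (D : Derivation R A A) (I : Ideal A) :
    ∀ n : ℕ, ∀ x ∈ I ^ (n + 1), D x ∈ I ^ n := by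
  intro n
  induction n with
  | zero => intro x _; simp
  | succ n ih =>
    intro x hx
    rw [pow_succ] at hx
    refine Submodule.mul_induction_on hx (fun a ha b hb => ?_) (fun x y hx hy => ?_)
    · rw [Derivation.leibniz, smul_eq_mul, smul_eq_mul]
      refine add_mem (Ideal.mul_mem_right _ _ ha) ?_
      have : b * D a ∈ I * I ^ n := Submodule.mul_mem_mul hb (ih a ha)
      rwa [← pow_succ'] at this
    · rw [map_add]; exact add_mem hx hy

theorem pderiv_mem_symbolicPower {R : Type*} [Field R] {σ : Type*}
    (P : Ideal (MvPolynomial σ R)) [P.IsPrime] (n : ℕ) (f : MvPolynomial σ R)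
    (hf : f ∈ symbolicPower P (n + 1)) (i : σ) :
    MvPolynomial.pderiv i f ∈ symbolicPower P n := by
  rw [mem_symbolicPower_iff] at hf ⊢
  obtain ⟨s, hs, hsf⟩ := hf
  refine ⟨s * s, fun hc => ?_, ?_⟩
  · rcases (Ideal.isPrime_iff.mp inferInstance).2 hc with h | h <;> exact hs h
  · have key : s * s * MvPolynomial.pderiv i f =
        s * MvPolynomial.pderiv i (s * f) - MvPolynomial.pderiv i s * (s * f) := by
      rw [MvPolynomial.pderiv_mul]; ring
    rw [key]
    refine sub_mem (Ideal.mul_mem_left _ _ (derivation_mem_pow _ _ _ _ hsf))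
      (Ideal.mul_mem_left _ _ ?_)
    exact Ideal.pow_le_pow_right (Nat.le_succ n) hsf

theorem coeff_pderiv {σ K : Type*} [CommSemiring K] (i : σ) (τ : σ →₀ ℕ)
    (f : MvPolynomial σ K) :
    MvPolynomial.coeff τ (MvPolynomial.pderiv i f) =
      ((τ i + 1 : ℕ) : K) * MvPolynomial.coeff (τ + Finsupp.single i 1) f := by
  classical
  induction f using MvPolynomial.induction_on' with
  | add p q hp hq => simp [hp, hq, mul_add]
  | monomial s a =>
    rw [MvPolynomial.pderiv_monomial, MvPolynomial.coeff_monomial,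
      MvPolynomial.coeff_monomial]
    by_cases h : s = τ + Finsupp.single i 1
    · subst h
      rw [if_pos (add_tsub_cancel_right _ _), if_pos rfl]
      simp [mul_comm]
    · rw [if_neg h]
      by_cases hsi : s i = 0
      · simp [hsi]
      · have hne : s - Finsupp.single i 1 ≠ τ := by
          intro hc
          apply h
          rw [← hc, tsub_add_cancel_of_le]
          exact Finsupp.single_le_iff.mpr (Nat.one_le_iff_ne_zero.mpr hsi)
        rw [if_neg hne, mul_zero]

theorem mem_pow_succ_of_pderiv_mem {σ K : Type*} [Field K] [CharZero K] {k : ℕ}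
    {f : MvPolynomial σ K}
    (hf1 : f ∈ Ideal.span (Set.range (MvPolynomial.X : σ → MvPolynomial σ K)))
    (hf : ∀ i, MvPolynomial.pderiv i f ∈
      (Ideal.span (Set.range (MvPolynomial.X : σ → MvPolynomial σ K))) ^ k) :
    f ∈ (Ideal.span (Set.range (MvPolynomial.X : σ → MvPolynomial σ K))) ^ (k + 1) := by
  classical
  rw [mem_span_X_pow_iff]
  intro m hm
  have h1 : 1 ≤ m.sum fun _ e => e := by
    have : f ∈ (Ideal.span (Set.range (MvPolynomial.X : σ → MvPolynomial σ K))) ^ 1 := by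
      rwa [pow_one]
    exact mem_span_X_pow_iff.mp this m hm
  have hne : ∃ i, m i ≠ 0 := by
    by_contra hc
    push_neg at hc
    have : m = 0 := Finsupp.ext fun i => hc i
    simp [this] at h1
  obtain ⟨i, hi⟩ := hne
  set τ := m - Finsupp.single i 1 with hτdef
  have hτ : τ + Finsupp.single i 1 = m :=
    tsub_add_cancel_of_le (Finsupp.single_le_iff.mpr (Nat.one_le_iff_ne_zero.mpr hi))
  have hτmem : τ ∈ (MvPolynomial.pderiv i f).support := by
    rw [MvPolynomial.mem_support_iff, _root_.coeff_pderiv, hτ]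
    exact mul_ne_zero (Nat.cast_ne_zero.mpr (Nat.succ_ne_zero _))
      (MvPolynomial.mem_support_iff.mp hm)
  have hk : k ≤ τ.sum fun _ e => e := mem_span_X_pow_iff.mp (hf i) τ hτmem
  have hsum : (m.sum fun _ e => e) = (τ.sum fun _ e => e) + 1 := by
    rw [← hτ, Finsupp.sum_add_index (by simp) (by simp), Finsupp.sum_single_index]
    rfl
  omega

set_option maxHeartbeats 1000000 in
theorem symbolicPower_le_pow_maximalIdeal_of_le_pow' {K : Type*} [Field K] [CharZero K]
    (d : ℕ) (P : Ideal (MvPolynomial (Fin d) K)) [P.IsPrime]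
    (t : ℕ) (ht : 0 < t)
    (hPt : P ≤ (Ideal.span (Set.range (MvPolynomial.X : Fin d → MvPolynomial (Fin d) K))) ^ t)
    (n : ℕ) (hn : 0 < n) :
    symbolicPower P n ≤
      (Ideal.span (Set.range (MvPolynomial.X : Fin d → MvPolynomial (Fin d) K))) ^ (n + t - 1) := by
  set m := Ideal.span (Set.range (MvPolynomial.X : Fin d → MvPolynomial (Fin d) K)) with hm
  have hPm : P ≤ m := le_trans hPt (Ideal.pow_le_self ht.ne')
  have key : ∀ k : ℕ, ∀ f, f ∈ symbolicPower P (k + 1) → f ∈ m ^ (k + t) := by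
    intro k
    induction k with
    | zero =>
      intro f hf
      rw [mem_symbolicPower_iff] at hf
      obtain ⟨s, hs, hsf⟩ := hf
      rw [pow_one] at hsf
      have hfP : f ∈ P := ((Ideal.isPrime_iff.mp inferInstance).2 hsf).resolve_left hs
      simpa using hPt hfP
    | succ k ih =>
      intro f hf
      have hfP : f ∈ P := by
        rw [mem_symbolicPower_iff] at hf
        obtain ⟨s, hs, hsf⟩ := hf
        have : s * f ∈ P := Ideal.pow_le_self (Nat.succ_ne_zero _) hsf
        exact ((Ideal.isPrime_iff.mp inferInstance).2 this).resolve_left hs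
      have hstep := mem_pow_succ_of_pderiv_mem (hPm hfP)
        (fun i => ih _ (pderiv_mem_symbolicPower P (k + 1) f hf i))
      rwa [show k + t + 1 = k + 1 + t by omega] at hstep
  intro f hf
  have hf' : f ∈ symbolicPower P ((n - 1) + 1) := by
    rwa [Nat.sub_add_cancel hn]
  have := key (n - 1) f hf'
  rwa [show n + t - 1 = (n - 1) + t by omega]

/-- If `K` is a field of characteristic zero, `R = K[x_1, …, x_d]`, `𝔪 = (x_1, …, x_d)`,
and `𝔭 ⊆ 𝔪^t` is a prime ideal, then `𝔭^{(n)} ⊆ 𝔪^{n+t-1}` for every positive `n`. -/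
theorem symbolicPower_le_pow_maximalIdeal_of_le_pow {K : Type*} [Field K] [CharZero K]
    (d : ℕ) (P : Ideal (MvPolynomial (Fin d) K)) [P.IsPrime]
    (t : ℕ) (ht : 0 < t)
    (hPt : P ≤ (Ideal.span (Set.range (MvPolynomial.X : Fin d → MvPolynomial (Fin d) K))) ^ t)
    (n : ℕ) (hn : 0 < n) :
    symbolicPower P n ≤
      (Ideal.span (Set.range (MvPolynomial.X : Fin d → MvPolynomial (Fin d) K))) ^ (n + t - 1) := by
  exact symbolicPower_le_pow_maximalIdeal_of_le_pow' d P t ht hPt n hn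
end

section
/- Let R be a Noetherian commutative ring and let I be an ideal of R. Then the set A(I) = ⋃_{n ≥ 1} Ass_R(R/I^n), the union over all n ≥ 1 of the sets of associated primes of R/I^n, is a finite set. -/
set_option maxHeartbeats 1000000
set_option synthInstance.maxHeartbeats 400000

open Polynomial

theorem mem_colon_bot_singleton' {R M : Type*} [CommRing R] [AddCommGroup M] [Module R M]
    (g : M) (r : R) : r ∈ (⊥ : Submodule R M).colon {g} ↔ r • g = 0 := by
  rw [Submodule.mem_colon_singleton, Submodule.mem_bot]

section FiniteAss

variable {R A M : Type*} [CommRing R] [IsNoetherianRing R] [CommRing A] [Algebra R A] [AddCommGroup M]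
  [Module A M] [Module R M] [IsScalarTower R A M]

/-- If `M` is a Noetherian module over a Noetherian `R`-algebra `A`, then the set of
`R`-associated primes of `M` is finite. -/
theorem associatedPrimes_finite_of_isNoetherian [IsNoetherianRing A] [IsNoetherian A M] :
    (associatedPrimes R M).Finite := by
  suffices h : ∀ N : Submodule A M, (associatedPrimes R (M ⧸ N)).Finite by
    refine (h ⊥).subset (associatedPrimes.subset_of_injective
      (f := (Submodule.mkQ (⊥ : Submodule A M)).restrictScalars R) ?_)
    intro a b hab
    have := Submodule.Quotient.eq (⊥ : Submodule A M) |>.mp hab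
    simpa [sub_eq_zero] using this
  intro N
  induction N using IsNoetherian.induction with
  | _ N ih =>
  by_cases hs : Subsingleton (M ⧸ N)
  · rw [associatedPrimes.eq_empty_of_subsingleton]
    exact Set.finite_empty
  have : Nontrivial (M ⧸ N) := not_subsingleton_iff_nontrivial.mp hs
  obtain ⟨P, hP⟩ := associatedPrimes.nonempty A (M ⧸ N)
  obtain ⟨hPprime, x, hx⟩ := isAssociatedPrime_iff.mp hP
  have hx0 : x ≠ 0 := by
    rintro rfl
    apply hPprime.ne_top
    rw [hx, eq_top_iff]
    intro r _
    exact (mem_colon_bot_singleton' _ _).mpr (smul_zero r)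
  obtain ⟨x', hx'⟩ := Submodule.Quotient.mk_surjective N x
  set N' : Submodule A M := Submodule.comap N.mkQ (Submodule.span A {x}) with hN'
  have hNN' : N ≤ N' := by
    intro m hm
    simp only [hN', Submodule.mem_comap, Submodule.mkQ_apply]
    rw [(Submodule.Quotient.mk_eq_zero N).mpr hm]
    exact Submodule.zero_mem _
  have hlt : N < N' := by
    refine lt_of_le_of_ne hNN' fun e => hx0 ?_
    have hx'N' : x' ∈ N' := by
      simp only [hN', Submodule.mem_comap, Submodule.mkQ_apply, hx']
      exact Submodule.mem_span_singleton_self x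
    rw [← e] at hx'N'
    rw [← hx', Submodule.Quotient.mk_eq_zero]
    exact hx'N'
  have hfin := ih N' hlt
  set π : (M ⧸ N) →ₗ[A] (M ⧸ N') :=
    Submodule.mapQ N N' LinearMap.id (fun m hm => hNN' hm) with hπ
  have hker : ∀ z : M ⧸ N, π z = 0 ↔ z ∈ Submodule.span A {x} := by
    intro z
    obtain ⟨m, rfl⟩ := Submodule.Quotient.mk_surjective N z
    rw [hπ]
    erw [Submodule.mapQ_apply]
    rw [Submodule.Quotient.mk_eq_zero]
    simp [hN', hx']
  have key : associatedPrimes R (M ⧸ N) ⊆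
      insert (P.comap (algebraMap R A)) (associatedPrimes R (M ⧸ N')) := by
    rintro p hp'
    obtain ⟨hp, z, hz⟩ := isAssociatedPrime_iff.mp hp'
    by_cases hcase : ∃ r : R, π (r • z) = 0 ∧ r • z ≠ 0
    · obtain ⟨r, hr0, hrne⟩ := hcase
      have hmem : r • z ∈ Submodule.span A {x} := (hker _).mp hr0
      obtain ⟨a, ha⟩ := Submodule.mem_span_singleton.mp hmem
      left
      have hrp : r ∉ p := by
        intro hrp
        apply hrne
        rw [hz] at hrp
        exact (mem_colon_bot_singleton' _ _).mp hrp
      have haP : a ∉ P := by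
        intro haP
        apply hrne
        rw [← ha]
        rw [hx] at haP
        exact (mem_colon_bot_singleton' _ _).mp haP
      ext s
      rw [Ideal.mem_comap]
      constructor
      · intro hs
        have : s * r ∈ p := Ideal.mul_mem_right _ _ hs
        rw [hz, mem_colon_bot_singleton', mul_smul] at this
        -- this : s • (r • z) = 0
        rw [← ha] at this
        rw [← algebraMap_smul A s (a • x), ← mul_smul] at this
        -- want : algebraMap R A s ∈ P
        have := (mem_colon_bot_singleton' _ _).mpr this
        rw [← hx] at this
        exact (hPprime.mem_or_mem this).resolve_right haP
      · intro hs
        have : algebraMap R A s * a ∈ P := Ideal.mul_mem_right _ _ hs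
        rw [hx, mem_colon_bot_singleton', mul_smul,
          algebraMap_smul] at this
        -- this : s • (a • x) = 0
        rw [ha, ← mul_smul] at this
        have : s * r ∈ p := by
          rw [hz, mem_colon_bot_singleton']
          exact this
        exact (hp.mem_or_mem this).resolve_right hrp
    · push_neg at hcase
      right
      refine isAssociatedPrime_iff.mpr ⟨hp, π z, ?_⟩
      ext s
      rw [hz, mem_colon_bot_singleton',
        mem_colon_bot_singleton']
      have hπs : ∀ s : R, s • π z = π (s • z) := fun s => by
        rw [← algebraMap_smul A s z, map_smul, algebraMap_smul]
      constructor
      · intro hs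
        rw [hπs, hs, map_zero]
      · intro hs
        rw [hπs] at hs
        exact hcase s hs
  exact ((hfin.insert _).subset key)

end FiniteAss

section Rees

variable {R : Type*} [CommRing R] (I : Ideal R)

/-- The element `x·tⁿ` of the Rees algebra, for `x ∈ Iⁿ`. -/
noncomputable def reesMono (n : ℕ) (x : R) (hx : x ∈ I ^ n) : reesAlgebra I :=
  ⟨Polynomial.monomial n x, reesAlgebra.monomial_mem.mpr hx⟩

theorem coeff_mem_of_mem_map {f : reesAlgebra I}
    (hf : f ∈ I.map (algebraMap R (reesAlgebra I))) (n : ℕ) :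
    (f : R[X]).coeff n ∈ I ^ (n + 1) := by
  rw [Ideal.map, Ideal.span] at hf
  refine Submodule.span_induction
    (p := fun f _ => ∀ n : ℕ, ((f : reesAlgebra I) : R[X]).coeff n ∈ I ^ (n + 1))
    ?_ ?_ ?_ ?_ hf n
  · rintro _ ⟨a, ha, rfl⟩ n
    show (Polynomial.C a).coeff n ∈ I ^ (n + 1)
    rw [coeff_C]
    split_ifs with h
    · subst h; simpa using ha
    · exact Submodule.zero_mem _
  · intro n; simp
  · intro f g hf hg ihf ihg n
    push_cast
    rw [coeff_add]
    exact Ideal.add_mem _ (ihf n) (ihg n)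
  · intro s f hf ihf n
    rw [smul_eq_mul]
    push_cast
    rw [coeff_mul]
    apply Ideal.sum_mem
    rintro ⟨j, k⟩ e
    have h1 : (s : R[X]).coeff j ∈ I ^ j := s.2 j
    have h2 : ((f : reesAlgebra I) : R[X]).coeff k ∈ I ^ (k + 1) := ihf k
    have : I ^ j * I ^ (k + 1) ≤ I ^ (n + 1) := by
      rw [← pow_add]
      have : j + (k + 1) = n + 1 := by
        have := Finset.HasAntidiagonal.mem_antidiagonal.mp e
        omega
      rw [this]
    exact this (Ideal.mul_mem_mul h1 h2)

theorem reesMono_mem_map {n : ℕ} {x : R} (hx : x ∈ I ^ (n + 1)) :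
    reesMono I n x (Ideal.pow_le_pow_right n.le_succ hx) ∈
      I.map (algebraMap R (reesAlgebra I)) := by
  rw [pow_succ] at hx
  have : ∃ h : x ∈ I ^ n, reesMono I n x h ∈ I.map (algebraMap R (reesAlgebra I)) := by
    refine Submodule.mul_induction_on hx ?_ ?_
    · intro a ha b hb
      refine ⟨Ideal.mul_mem_right b _ ha, ?_⟩
      have : reesMono I n (a * b) (Ideal.mul_mem_right b _ ha) =
          reesMono I n a ha * algebraMap R (reesAlgebra I) b := by
        apply Subtype.ext
        push_cast [reesMono]
        rw [Polynomial.algebraMap_eq, monomial_mul_C]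
      rw [this]
      exact Ideal.mul_mem_left _ _ (Ideal.mem_map_of_mem _ hb)
    · rintro f g ⟨hf, hfm⟩ ⟨hg, hgm⟩
      refine ⟨Ideal.add_mem _ hf hg, ?_⟩
      have : reesMono I n (f + g) (Ideal.add_mem _ hf hg) =
          reesMono I n f hf + reesMono I n g hg := by
        apply Subtype.ext
        push_cast [reesMono]
        rw [map_add]
      rw [this]
      exact Ideal.add_mem _ hfm hgm
  obtain ⟨h, hm⟩ := this
  convert hm using 2

theorem mem_pow_succ_iff_reesMono_mem {n : ℕ} {x : R} (hx : x ∈ I ^ n) :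
    x ∈ I ^ (n + 1) ↔ reesMono I n x hx ∈ I.map (algebraMap R (reesAlgebra I)) := by
  constructor
  · intro h
    have := reesMono_mem_map I h
    convert this using 2
  · intro h
    have := coeff_mem_of_mem_map I h n
    simpa [reesMono] using this

end Rees

/-- **Brodmann's theorem**: for an ideal `I` of a Noetherian commutative ring `R`, the set
`A(I) = ⋃_{n ≥ 1} Ass_R(R/Iⁿ)` of associated primes of all the powers of `I` is finite. -/
theorem finite_iUnion_associatedPrimes_quotient_pow {R : Type*} [CommRing R]
    [IsNoetherianRing R] (I : Ideal R) :
    (⋃ n : ℕ, ⋃ (_ : 1 ≤ n), associatedPrimes R (R ⧸ I ^ n)).Finite := by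
  have hfin : (associatedPrimes R
      (reesAlgebra I ⧸ I.map (algebraMap R (reesAlgebra I)))).Finite :=
    associatedPrimes_finite_of_isNoetherian (A := reesAlgebra I)
  refine hfin.subset ?_
  refine Set.iUnion_subset fun n => Set.iUnion_subset fun _ => ?_
  clear ‹1 ≤ n›
  induction n with
  | zero =>
    rw [pow_zero, Ideal.one_eq_top]
    haveI : Subsingleton (R ⧸ (⊤ : Ideal R)) :=
      Submodule.Quotient.subsingleton_iff.mpr rfl
    rw [associatedPrimes.eq_empty_of_subsingleton]
    exact Set.empty_subset _
  | succ n ih =>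
    rintro p hp'
    obtain ⟨hp, z, hz⟩ := isAssociatedPrime_iff.mp hp'
    obtain ⟨x, rfl⟩ := Submodule.Quotient.mk_surjective _ z
    have hzmem : ∀ s : R, s ∈ p ↔ s * x ∈ I ^ (n + 1) := by
      intro s
      rw [hz, mem_colon_bot_singleton', ← Submodule.Quotient.mk_smul,
        Submodule.Quotient.mk_eq_zero]
      simp [smul_eq_mul]
    by_cases hcase : ∃ r : R, r * x ∈ I ^ n ∧ r * x ∉ I ^ (n + 1)
    · obtain ⟨r, hrn, hrn1⟩ := hcase
      set w := r * x with hw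
      refine isAssociatedPrime_iff.mpr ⟨hp, Submodule.Quotient.mk (reesMono I n w hrn), ?_⟩
      have hrp : r ∉ p := fun h => hrn1 ((hzmem r).mp (by simpa using h))
      ext s
      rw [mem_colon_bot_singleton']
      have hsm : s • reesMono I n w hrn = reesMono I n (s * w) (Ideal.mul_mem_left _ s hrn) := by
        apply Subtype.ext
        show (s • (reesMono I n w hrn) : reesAlgebra I).1 = _
        rw [SetLike.val_smul]
        show s • (monomial n w : R[X]) = (monomial n (s * w) : R[X])
        rw [Polynomial.smul_monomial, smul_eq_mul]
      rw [← Submodule.Quotient.mk_smul, hsm, Submodule.Quotient.mk_eq_zero,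
        ← mem_pow_succ_iff_reesMono_mem]
      constructor
      · intro hs
        have : s * r ∈ p := Ideal.mul_mem_right _ _ hs
        rw [hzmem] at this
        rwa [hw, ← mul_assoc]
      · intro hs
        rw [hw, ← mul_assoc] at hs
        have : s * r ∈ p := (hzmem _).mpr hs
        exact (hp.mem_or_mem this).resolve_right hrp
    · push_neg at hcase
      apply ih
      refine isAssociatedPrime_iff.mpr ⟨hp, Submodule.Quotient.mk (p := (I ^ n : Ideal R)) x, ?_⟩
      ext s
      rw [mem_colon_bot_singleton', ← Submodule.Quotient.mk_smul,
        Submodule.Quotient.mk_eq_zero]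
      constructor
      · intro hs
        have := (hzmem s).mp hs
        have h2 : s * x ∈ I ^ n := Ideal.pow_le_pow_right n.le_succ this
        simpa [smul_eq_mul] using h2
      · intro hs
        rw [hzmem]
        exact hcase s (by simpa [smul_eq_mul] using hs)
end

section
/- Let R ⊆ S be a finite extension of Noetherian integral domains with R integrally closed in its fraction field, and let e = [Frac(S) : Frac(R)] be the degree of the fraction field extension. Let 𝔮 be a prime ideal of R. Then: (a) for every x ∈ √(𝔮S) one has x^e ∈ 𝔮S; and (b) if e! is invertible in S, then (√(𝔮S))^e ⊆ 𝔮S. -/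
open Finset Polynomial

lemma sum_sign_aux {A : Type*} [CommRing A] {e : ℕ} (sp : Finset (Fin e)) :
    (∑ T ∈ (univ : Finset (Fin e)).powerset, if sp ⊆ T then (-1 : A) ^ (e - #T) else 0)
      = if sp = univ then 1 else 0 := by
  classical
  rw [← sum_filter]
  have hre : ∑ T ∈ (univ : Finset (Fin e)).powerset.filter (fun T => sp ⊆ T),
      (-1 : A) ^ (e - #T) = ∑ U ∈ spᶜ.powerset, (-1 : A) ^ (e - #(sp ∪ U)) := by
    refine Finset.sum_nbij' (fun T => T \ sp) (fun U => sp ∪ U) ?_ ?_ ?_ ?_ ?_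
    · intro T hT
      simp only [mem_filter, mem_powerset] at hT
      simp only [mem_powerset]
      intro a ha
      simp only [mem_sdiff] at ha
      simp [Finset.mem_compl, ha.2]
    · intro U hU
      simp only [mem_powerset] at hU ⊢
      simp [mem_filter, subset_univ]
    · intro T hT
      simp only [mem_filter, mem_powerset] at hT
      exact Finset.union_sdiff_of_subset hT.2
    · intro U hU
      simp only [mem_powerset] at hU
      exact Finset.union_sdiff_cancel_left
        (Finset.disjoint_left.mpr fun a ha hb => (Finset.mem_compl.mp (hU hb)) ha)
    · intro T hT
      simp only [mem_filter, mem_powerset] at hT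
      rw [Finset.union_sdiff_of_subset hT.2]
  rw [hre]
  have hcard : ∀ U ∈ spᶜ.powerset, (-1 : A) ^ (e - #(sp ∪ U)) = (-1) ^ #spᶜ * (-1) ^ #U := by
    intro U hU
    simp only [mem_powerset] at hU
    have hdisj : Disjoint sp U := Finset.disjoint_left.mpr fun a ha hb =>
      (Finset.mem_compl.mp (hU hb)) ha
    rw [Finset.card_union_of_disjoint hdisj]
    have h2 : #U ≤ #spᶜ := Finset.card_le_card hU
    have h3 : e - (#sp + #U) = #spᶜ - #U := by
      have h5 := Finset.card_le_univ sp
      have h1 : #spᶜ = e - #sp := by rw [Finset.card_compl, Fintype.card_fin]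
      simp only [Fintype.card_fin] at h5
      omega
    rw [h3]
    calc (-1 : A) ^ (#spᶜ - #U)
        = (-1 : A) ^ (#spᶜ - #U) * ((-1) ^ #U * (-1) ^ #U) := by
          rw [← pow_add, ← two_mul, pow_mul, neg_one_sq, one_pow, mul_one]
      _ = ((-1 : A) ^ (#spᶜ - #U) * (-1) ^ #U) * (-1) ^ #U := by ring
      _ = (-1) ^ #spᶜ * (-1) ^ #U := by rw [← pow_add, Nat.sub_add_cancel h2]
  rw [Finset.sum_congr rfl hcard, ← Finset.mul_sum]
  have hz : (∑ U ∈ spᶜ.powerset, (-1 : A) ^ #U) = if spᶜ = ∅ then 1 else 0 := by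
    have h := Finset.sum_powerset_neg_one_pow_card (x := spᶜ)
    have h2 := congrArg (fun z : ℤ => (z : A)) h
    simp only [Int.cast_sum, Int.cast_pow, Int.cast_neg, Int.cast_one] at h2
    rw [h2]
    split <;> simp
  rw [hz]
  rcases eq_or_ne sp univ with rfl | hne
  · simp
  · rw [if_neg hne, if_neg (by simpa [Finset.compl_eq_empty_iff] using hne), mul_zero]

lemma polarization_identity {A : Type*} [CommRing A] (e : ℕ) (x : Fin e → A) :
    ∑ T ∈ (univ : Finset (Fin e)).powerset, (-1 : A) ^ (e - #T) * (∑ i ∈ T, x i) ^ e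
      = (e.factorial : A) * ∏ i, x i := by
  classical
  have key : ∀ T ∈ (univ : Finset (Fin e)).powerset,
      (-1 : A) ^ (e - #T) * (∑ i ∈ T, x i) ^ e
        = ∑ k ∈ piAntidiag (univ : Finset (Fin e)) e,
            (if univ.filter (fun i => k i ≠ 0) ⊆ T then
              (-1 : A) ^ (e - #T) * ((Nat.multinomial univ k : A) * ∏ i, x i ^ k i) else 0) := by
    intro T _
    rw [Finset.sum_pow_eq_sum_piAntidiag, Finset.mul_sum, ← Finset.sum_filter]
    have hset : (piAntidiag (univ : Finset (Fin e)) e).filter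
        (fun k => univ.filter (fun i => k i ≠ 0) ⊆ T) = piAntidiag T e := by
      ext k
      have hcond : (∀ i, k i ≠ 0 → i ∈ T) → (∑ i ∈ T, k i = ∑ i, k i) := fun hz =>
        Finset.sum_subset (subset_univ T) (fun i _ hiT => by
          by_contra h0; exact hiT (hz i h0))
      simp only [mem_filter, mem_piAntidiag]
      constructor
      · rintro ⟨⟨hsum, -⟩, hsub⟩
        have hz : ∀ i, k i ≠ 0 → i ∈ T := fun i hi => hsub (mem_filter.mpr ⟨mem_univ _, hi⟩)
        exact ⟨(hcond hz).trans hsum, hz⟩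
      · rintro ⟨hsum, hz⟩
        exact ⟨⟨(hcond hz).symm.trans hsum, fun i _ => mem_univ i⟩,
          fun i hi => hz i (mem_filter.mp hi).2⟩
    rw [hset]
    refine Finset.sum_congr rfl fun k hk => ?_
    obtain ⟨hsum, hz⟩ := mem_piAntidiag.mp hk
    have hk0 : ∀ i ∈ (univ : Finset (Fin e)), i ∉ T → k i = 0 := fun i _ hiT => by
      by_contra h0; exact hiT (hz i h0)
    have hmult : Nat.multinomial T k = Nat.multinomial univ k := by
      unfold Nat.multinomial
      rw [Finset.sum_subset (subset_univ T) hk0,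
        Finset.prod_subset (subset_univ T) (fun i hi hiT => by rw [hk0 i hi hiT]; rfl)]
    have hprod : ∏ i ∈ T, x i ^ k i = ∏ i, x i ^ k i :=
      Finset.prod_subset (subset_univ T) (fun i hi hiT => by rw [hk0 i hi hiT, pow_zero])
    rw [hmult, hprod]
  rw [Finset.sum_congr rfl key, Finset.sum_comm]
  have inner : ∀ k ∈ piAntidiag (univ : Finset (Fin e)) e,
      (∑ T ∈ (univ : Finset (Fin e)).powerset,
        if univ.filter (fun i => k i ≠ 0) ⊆ T then
          (-1 : A) ^ (e - #T) * ((Nat.multinomial univ k : A) * ∏ i, x i ^ k i) else 0)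
      = (if univ.filter (fun i => k i ≠ 0) = univ then 1 else 0) *
          ((Nat.multinomial univ k : A) * ∏ i, x i ^ k i) := by
    intro k _
    rw [← sum_sign_aux (univ.filter (fun i => k i ≠ 0)), Finset.sum_mul]
    exact Finset.sum_congr rfl fun T _ => by rw [ite_mul, zero_mul]
  rw [Finset.sum_congr rfl inner]
  refine (Finset.sum_eq_single (fun _ => (1:ℕ)) ?_ ?_).trans ?_
  · intro k hk hne
    rw [if_neg, zero_mul]
    intro hfil
    apply hne
    obtain ⟨hsum, -⟩ := mem_piAntidiag.mp hk
    have hpos : ∀ i, 1 ≤ k i := fun i => Nat.one_le_iff_ne_zero.mpr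
      (mem_filter.mp (hfil.symm ▸ mem_univ i : i ∈ univ.filter (fun i => k i ≠ 0))).2
    have hsum1 : ∑ _i : Fin e, (1:ℕ) = e := by simp
    have hone : ∀ i, k i = 1 := by
      by_contra hcon
      push_neg at hcon
      obtain ⟨j, hj⟩ := hcon
      have hlt : ∑ _i : Fin e, (1:ℕ) < ∑ i, k i :=
        Finset.sum_lt_sum (fun i _ => hpos i) ⟨j, mem_univ j, by have := hpos j; omega⟩
      rw [hsum1, hsum] at hlt
      exact lt_irrefl e hlt
    funext i
    exact hone i
  · intro h1
    exact absurd (mem_piAntidiag.mpr ⟨by simp, fun i _ => mem_univ i⟩) h1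
  · have hm : (Nat.multinomial (univ : Finset (Fin e)) (fun _ => 1)) = e.factorial := by
      have h := Nat.multinomial_spec (univ : Finset (Fin e)) (fun _ => 1)
      simpa using h
    simp [hm]

lemma pow_le_of_forall_pow_mem {A : Type*} [CommRing A] {I J : Ideal A} {e : ℕ} (he : 0 < e)
    (h : ∀ x ∈ I, x ^ e ∈ J) (hu : IsUnit ((e.factorial : ℕ) : A)) : I ^ e ≤ J := by
  classical
  have hprod : ∀ f : Fin e → A, (∀ i, f i ∈ I) → ∏ i, f i ∈ J := by
    intro f hf
    obtain ⟨u, hu'⟩ := hu.exists_left_inv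
    have hmem : ((e.factorial : ℕ) : A) * ∏ i, f i ∈ J := by
      rw [← polarization_identity]
      exact Ideal.sum_mem _ fun T _ => Ideal.mul_mem_left _ _
        (h _ (Ideal.sum_mem _ fun i _ => hf i))
    have : ∏ i, f i = (u : A) * (((e.factorial : ℕ) : A) * ∏ i, f i) := by
      rw [← mul_assoc, hu', one_mul]
    rw [this]
    exact Ideal.mul_mem_left _ _ hmem
  have key : ∀ n, 0 < n → ∀ c : A,
      (∀ f : Fin n → A, (∀ i, f i ∈ I) → c * ∏ i, f i ∈ J) →
      ∀ z ∈ I ^ n, c * z ∈ J := by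
    intro n
    induction n with
    | zero => exact fun h0 => absurd h0 (lt_irrefl 0)
    | succ n ih =>
      intro _ c hc z hz
      rcases Nat.eq_zero_or_pos n with rfl | hn
      · rw [pow_one] at hz
        simpa using hc (fun _ => z) (fun _ => hz)
      · rw [pow_succ] at hz
        refine Submodule.mul_induction_on hz ?_ ?_
        · intro m hm p hp
          have hJ : (c * p) * m ∈ J := by
            refine ih hn (c * p) (fun f hf => ?_) m hm
            have := hc (Fin.cons p f) (fun i => by
              refine Fin.cases ?_ ?_ i
              · simpa using hp
              · intro j; simpa using hf j)
            rw [Fin.prod_cons, ← mul_assoc] at this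
            exact this
          have : c * (m * p) = (c * p) * m := by ring
          rw [this]
          exact hJ
        · intro a b ha hb
          simpa [mul_add] using J.add_mem ha hb
  have := key e he 1 (fun f hf => by simpa using hprod f hf) 
  intro z hz
  simpa using this z hz

open Polynomial

lemma exists_nonzero_algebraMap_eq_mul {R S : Type*} [CommRing R] [Nontrivial R] [CommRing S]
    [IsDomain S] [Algebra R S] {b : S} (hb : b ≠ 0) (hbi : IsIntegral R b) :
    ∃ r : R, r ≠ 0 ∧ ∃ s : S, algebraMap R S r = b * s := by
  obtain ⟨p, pm, hp⟩ := hbi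
  have H : ∀ N (p : R[X]), p.Monic → Polynomial.aeval b p = 0 → p.natDegree ≤ N →
      ∃ r : R, r ≠ 0 ∧ ∃ s : S, algebraMap R S r = b * s := by
    intro N
    induction N with
    | zero =>
      intro p pm hp hd
      have h1 : p = 1 := pm.natDegree_eq_zero.mp (Nat.le_zero.mp hd)
      rw [h1, map_one] at hp
      exact absurd hp one_ne_zero
    | succ N ih =>
      intro p pm hp hd
      by_cases h0 : p.coeff 0 = 0
      · have hdeg : p.natDegree ≠ 0 := by
          intro hdeg0
          have h1 : p = 1 := pm.natDegree_eq_zero.mp hdeg0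
          rw [h1] at h0
          simp at h0
        have heq := Polynomial.X_mul_divX_add p
        have h2 := congrArg (Polynomial.aeval b) heq
        rw [map_add, map_mul, aeval_X, aeval_C, h0, map_zero, add_zero, hp] at h2
        have h3 : Polynomial.aeval b p.divX = 0 := by
          rcases mul_eq_zero.mp h2 with h | h
          · exact absurd h hb
          · exact h
        have hm : p.divX.Monic := by
          unfold Polynomial.Monic
          rw [Polynomial.leadingCoeff, Polynomial.natDegree_divX_eq_natDegree_tsub_one,
            Polynomial.coeff_divX]
          have : p.natDegree - 1 + 1 = p.natDegree := by omega
          rw [this]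
          exact pm
        refine ih p.divX hm h3 ?_
        rw [Polynomial.natDegree_divX_eq_natDegree_tsub_one]
        omega
      · refine ⟨p.coeff 0, h0, -(Polynomial.aeval b p.divX), ?_⟩
        have heq := Polynomial.X_mul_divX_add p
        have h2 := congrArg (Polynomial.aeval b) heq
        rw [map_add, map_mul, aeval_X, aeval_C, hp] at h2
        rw [mul_neg]
        linear_combination h2
  exact H p.natDegree p pm hp le_rfl

lemma finite_fractionRing_of_finite {R S : Type*} [CommRing R] [CommRing S] [IsDomain R]
    [IsDomain S] [Algebra R S] [Module.Finite R S] (hinj : Function.Injective (algebraMap R S))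
    (K L : Type*) [Field K] [Field L] [Algebra R K] [IsFractionRing R K]
    [Algebra S L] [IsFractionRing S L] [Algebra K L] [Algebra R L]
    [IsScalarTower R S L] [IsScalarTower R K L] : Module.Finite K L := by
  let f : S →ₗ[R] L := (IsScalarTower.toAlgHom R S L).toLinearMap
  have hSLinj : Function.Injective (algebraMap S L) := IsFractionRing.injective S L
  have hRL : Function.Injective (algebraMap R L) := by
    rw [IsScalarTower.algebraMap_eq R S L]; exact hSLinj.comp hinj
  have hloc : IsLocalizedModule (nonZeroDivisors R) f := by
    constructor
    · rintro ⟨m, hm⟩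
      rw [Module.End.isUnit_iff]
      have hm0 : algebraMap R L m ≠ 0 := fun h =>
        nonZeroDivisors.ne_zero hm (hRL (by rw [h, map_zero]))
      constructor
      · intro a b hab
        have h2 : algebraMap R L m * a = algebraMap R L m * b := by
          simpa [Module.algebraMap_end_apply, Algebra.smul_def] using hab
        exact mul_left_cancel₀ hm0 h2
      · intro l
        refine ⟨(algebraMap R L m)⁻¹ * l, ?_⟩
        show (m : R) • ((algebraMap R L m)⁻¹ * l) = l
        rw [Algebra.smul_def, ← mul_assoc, mul_inv_cancel₀ hm0, one_mul]
    · intro l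
      obtain ⟨⟨a, b⟩, hab⟩ := IsLocalization.surj (nonZeroDivisors S) l
      have hb0 : (b : S) ≠ 0 := nonZeroDivisors.ne_zero b.2
      have hbi : IsIntegral R (b : S) := IsIntegral.of_finite R _
      obtain ⟨r, hr, s, hrs⟩ := exists_nonzero_algebraMap_eq_mul hb0 hbi
      refine ⟨⟨a * s, ⟨r, mem_nonZeroDivisors_of_ne_zero hr⟩⟩, ?_⟩
      show (r : R) • l = algebraMap S L (a * s)
      rw [Algebra.smul_def, IsScalarTower.algebraMap_apply R S L, hrs, map_mul, map_mul]
      rw [mul_comm (algebraMap S L (b : S)) (algebraMap S L s), mul_assoc,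
        mul_comm (algebraMap S L (b : S)) l, hab]
      ring
    · intro x y hxy
      exact ⟨1, by simpa using hSLinj (show algebraMap S L x = algebraMap S L y from hxy)⟩
  exact Module.Finite.of_isLocalizedModule (nonZeroDivisors R) f


/-- Let `R ⊆ S` be a finite extension of Noetherian integral domains with `R` integrally
closed in its fraction field, and let `e = [Frac(S) : Frac(R)]`. If `𝔮` is a prime ideal
of `R`, then (a) `x^e ∈ 𝔮S` for every `x ∈ √(𝔮S)`, and (b) if `e!` is invertible in `S`,
then `(√(𝔮S))^e ⊆ 𝔮S`. -/
theorem pow_degree_mem_of_mem_radical_map {R S : Type*} [CommRing R] [CommRing S]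
    [IsDomain R] [IsDomain S] [IsNoetherianRing R] [IsNoetherianRing S]
    [Algebra R S] [Module.Finite R S] (hinj : Function.Injective (algebraMap R S))
    [IsIntegrallyClosed R]
    (K L : Type*) [Field K] [Field L] [Algebra R K] [IsFractionRing R K]
    [Algebra S L] [IsFractionRing S L] [Algebra K L] [Algebra R L]
    [IsScalarTower R S L] [IsScalarTower R K L]
    (e : ℕ) (he : Module.finrank K L = e)
    (q : Ideal R) (hq : q.IsPrime) :
    (∀ x ∈ (q.map (algebraMap R S)).radical, x ^ e ∈ q.map (algebraMap R S)) ∧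
      (IsUnit ((e.factorial : ℕ) : S) →
        ((q.map (algebraMap R S)).radical) ^ e ≤ q.map (algebraMap R S)) := by
  classical
  haveI := hq
  haveI hNZD : NoZeroSMulDivisors R S := ⟨fun {c y} h => by
    rw [Algebra.smul_def] at h
    rcases mul_eq_zero.mp h with h | h
    · exact Or.inl (hinj (by rw [h, map_zero]))
    · exact Or.inr h⟩
  haveI hfinKL : Module.Finite K L := finite_fractionRing_of_finite hinj K L
  have he1 : 0 < e := he ▸ Module.finrank_pos
  set I : Ideal S := q.map (algebraMap R S) with hIdef
  have parta : ∀ x ∈ I.radical, x ^ e ∈ I := by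
    intro x hx
    by_cases hI : I = ⊤
    · rw [hI]; exact Submodule.mem_top
    obtain ⟨n, hn⟩ := Ideal.mem_radical_iff.mp hx
    have hn0 : n ≠ 0 := by
      rintro rfl
      rw [pow_zero] at hn
      exact hI ((Ideal.eq_top_iff_one _).mpr hn)
    -- determinant trick
    have hrange : LinearMap.range ((Algebra.lmul R S) (x ^ n)) ≤ q • (⊤ : Submodule R S) := by
      rw [Ideal.smul_top_eq_map]
      rintro _ ⟨s, rfl⟩
      simp only [Submodule.restrictScalars_mem]
      exact I.mul_mem_right s hn
    obtain ⟨p, pmonic, -, hcoeff, haeval⟩ :=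
      LinearMap.exists_monic_and_coeff_mem_pow_and_aeval_eq_zero_of_range_le_smul R
        ((Algebra.lmul R S) (x ^ n)) q hrange
    have hyeval : Polynomial.aeval (x ^ n) p = 0 := by
      have h1 : Polynomial.aeval ((Algebra.lmul R S) (x ^ n)) p
          = (Algebra.lmul R S) (Polynomial.aeval (x ^ n) p) := by
        rw [Polynomial.aeval_algHom_apply]
      have h2 : (Algebra.lmul R S) (Polynomial.aeval (x ^ n) p) 1 = 0 := by
        rw [← h1, haeval]; rfl
      simpa using h2
    set g : Polynomial R := p.comp (Polynomial.X ^ n) with hgdef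
    have gmonic : g.Monic := pmonic.comp (Polynomial.monic_X_pow n)
      (by rwa [Polynomial.natDegree_X_pow])
    have hg0 : Polynomial.aeval x g = 0 := by
      rw [hgdef, Polynomial.aeval_comp]
      simpa using hyeval
    have hint : IsIntegral R x := IsIntegral.of_finite R x
    have hdvd : minpoly R x ∣ g := minpoly.isIntegrallyClosed_dvd hint hg0
    -- reduction mod q
    have hpbar : p.map (Ideal.Quotient.mk q) = Polynomial.X ^ p.natDegree := by
      ext k
      rw [Polynomial.coeff_map, Polynomial.coeff_X_pow]
      rcases lt_trichotomy k p.natDegree with hk | hk | hk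
      · rw [if_neg hk.ne]
        have hmem : p.coeff k ∈ q := by
          have h3 := hcoeff k
          have hpos : p.natDegree - k ≠ 0 := by omega
          exact Ideal.pow_le_self hpos h3
        exact Ideal.Quotient.eq_zero_iff_mem.mpr hmem
      · rw [if_pos hk, hk, pmonic.coeff_natDegree, map_one]
      · rw [if_neg hk.ne', Polynomial.coeff_eq_zero_of_natDegree_lt hk, map_zero]
    have hgbar : g.map (Ideal.Quotient.mk q) = Polynomial.X ^ g.natDegree := by
      rw [hgdef, Polynomial.map_comp, hpbar, Polynomial.map_pow, Polynomial.map_X,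
        Polynomial.natDegree_comp, Polynomial.natDegree_X_pow, Polynomial.X_pow_comp,
        ← pow_mul, Nat.mul_comm]
    obtain ⟨c, hc⟩ := hdvd
    have Pmonic : (minpoly R x).Monic := minpoly.monic hint
    have hPdvd : (minpoly R x).map (Ideal.Quotient.mk q) ∣ Polynomial.X ^ g.natDegree := by
      rw [← hgbar, hc, Polynomial.map_mul]
      exact Dvd.intro _ rfl
    obtain ⟨i, hi, hassoc⟩ := (dvd_prime_pow Polynomial.prime_X _).mp hPdvd
    have hPbar : (minpoly R x).map (Ideal.Quotient.mk q) = Polynomial.X ^ i :=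
      Polynomial.eq_of_monic_of_associated (Pmonic.map _) (Polynomial.monic_X_pow i) hassoc
    have hieq : (minpoly R x).natDegree = i := by
      have h4 := congrArg Polynomial.natDegree hPbar
      rwa [Pmonic.natDegree_map, Polynomial.natDegree_X_pow] at h4
    have hPcoeff : ∀ k < (minpoly R x).natDegree, (minpoly R x).coeff k ∈ q := by
      intro k hk
      have h5 : ((minpoly R x).map (Ideal.Quotient.mk q)).coeff k = 0 := by
        rw [hPbar, Polynomial.coeff_X_pow, if_neg (by omega)]
      rw [Polynomial.coeff_map] at h5
      exact Ideal.Quotient.eq_zero_iff_mem.mp h5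
    set d : ℕ := (minpoly R x).natDegree with hddef
    have hxd : x ^ d ∈ I := by
      have h0 := minpoly.aeval R x
      rw [Polynomial.aeval_eq_sum_range, Finset.sum_range_succ, ← hddef,
        Pmonic.coeff_natDegree, one_smul] at h0
      have h6 : x ^ d = -∑ j ∈ Finset.range d, (minpoly R x).coeff j • x ^ j :=
        eq_neg_of_add_eq_zero_right h0
      rw [h6]
      refine neg_mem (Ideal.sum_mem _ fun j hj => ?_)
      rw [Algebra.smul_def]
      exact Ideal.mul_mem_right _ _
        (Ideal.mem_map_of_mem _ (hPcoeff j (Finset.mem_range.mp hj)))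
    have hde : d ≤ e := by
      have h7 := minpoly.natDegree_le (A := K) (algebraMap S L x)
      rw [minpoly.isIntegrallyClosed_eq_field_fractions K L hint,
        Pmonic.natDegree_map, he] at h7
      exact h7
    have h8 : x ^ e = x ^ (e - d) * x ^ d := by rw [← pow_add, Nat.sub_add_cancel hde]
    rw [h8]
    exact I.mul_mem_left _ hxd
  exact ⟨parta, fun hu => pow_le_of_forall_pow_mem he1 parta hu⟩
end
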